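/- arXiv:2504.04312 — 8 statements merged into one kernel-verified Lean document; each statement's English description precedes it below -/
import Mathlib

section
/- The PPTA function μ is continuously differentiable (of class C¹) and bounded on the interval [0, ∞). -/
open Real Set

/-- The saturated prescribed-time adjustment (PPTA) function `μ` with
parameters `T` and `Ts` (denoted `T*` in the paper). -/
noncomputable def mu (T Ts : ℝ) (t : ℝ) : ℝ :=
  if t ≤ Ts then T / (T - t)
  else if t < T then
    (T / (T - Ts)) * (1 + (2 / Real.pi) * Real.sin ((Real.pi / 2) * ((t - Ts) / (T - Ts))))
  else ((Real.pi + 2) / Real.pi) * (T / (T - Ts))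

/-- Derivative of `mu`. -/
noncomputable def mu' (T Ts : ℝ) (t : ℝ) : ℝ :=
  if t ≤ Ts then T / (T - t) ^ 2
  else if t < T then
    T / (T - Ts) ^ 2 * Real.cos ((Real.pi / 2) * ((t - Ts) / (T - Ts)))
  else 0

section aux

variable {T Ts : ℝ} (hTs : 0 < Ts) (hT : Ts < T)

lemma mu_eq_f1 {x : ℝ} (hx : x ≤ Ts) : mu T Ts x = T / (T - x) := by
  simp [mu, hx]

lemma mu_eq_f2 (hT : Ts < T) {x : ℝ} (hx : x ∈ Set.Icc Ts T) :
    mu T Ts x =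
      (T / (T - Ts)) * (1 + (2 / Real.pi) * Real.sin ((Real.pi / 2) * ((x - Ts) / (T - Ts)))) := by
  rcases eq_or_lt_of_le hx.1 with rfl | h1
  · simp [mu]
  rcases eq_or_lt_of_le hx.2 with rfl | h2
  · have : (Real.pi / 2) * ((x - Ts) / (x - Ts)) = Real.pi / 2 := by
      rw [div_self (by linarith), mul_one]
    rw [mu, if_neg (not_le.mpr h1), if_neg (lt_irrefl x), this, Real.sin_pi_div_two]
    have hπ : Real.pi ≠ 0 := Real.pi_ne_zero
    field_simp
  · rw [mu, if_neg (not_le.mpr h1), if_pos h2]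

lemma mu_eq_f3 (hT : Ts < T) {x : ℝ} (hx : T ≤ x) :
    mu T Ts x = ((Real.pi + 2) / Real.pi) * (T / (T - Ts)) := by
  rw [mu, if_neg (by linarith), if_neg (not_lt.mpr hx)]

/-- derivative of the first piece, valid for `t ≠ T`. -/
lemma hasDerivAt_f1 {t : ℝ} (ht : t ≠ T) :
    HasDerivAt (fun x => T / (T - x)) (T / (T - t) ^ 2) t := by
  have h : HasDerivAt (fun x : ℝ => T - x) (-1) t := (hasDerivAt_id t).const_sub T
  have h2 := (h.inv (sub_ne_zero.mpr (Ne.symm ht))).const_mul T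
  have : T * (-(-1) / (T - t) ^ 2) = T / (T - t) ^ 2 := by ring
  rw [this] at h2
  simpa only [div_eq_mul_inv, Pi.inv_apply] using h2

/-- derivative of the middle piece, valid everywhere. -/
lemma hasDerivAt_f2 (hT : Ts < T) (t : ℝ) :
    HasDerivAt
      (fun x => (T / (T - Ts)) * (1 + (2 / Real.pi) * Real.sin ((Real.pi / 2) * ((x - Ts) / (T - Ts)))))
      (T / (T - Ts) ^ 2 * Real.cos ((Real.pi / 2) * ((t - Ts) / (T - Ts)))) t := by
  have hc : (0:ℝ) < T - Ts := by linarith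
  have hu : HasDerivAt (fun x : ℝ => (Real.pi / 2) * ((x - Ts) / (T - Ts)))
      (Real.pi / 2 * (1 / (T - Ts))) t := by
    have := (((hasDerivAt_id t).sub_const Ts).div_const (T - Ts)).const_mul (Real.pi / 2)
    simpa using this
  have hs := (Real.hasDerivAt_sin ((Real.pi / 2) * ((t - Ts) / (T - Ts)))).comp t hu
  have h2 := ((hs.const_mul (2 / Real.pi)).const_add 1).const_mul (T / (T - Ts))
  refine HasDerivAt.congr_deriv h2 ?_
  have hπ : Real.pi ≠ 0 := Real.pi_ne_zero
  field_simp [hc.ne']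

lemma hasDerivAt_mu (hTs : 0 < Ts) (hT : Ts < T) (t : ℝ) :
    HasDerivAt (mu T Ts) (mu' T Ts t) t := by
  have hc : (0:ℝ) < T - Ts := by linarith
  rcases lt_trichotomy t Ts with h1 | heq | h1
  · -- t < Ts
    rw [mu', if_pos h1.le]
    refine (hasDerivAt_f1 (by linarith)).congr_of_eventuallyEq ?_
    filter_upwards [Iio_mem_nhds h1] with x hx
    exact mu_eq_f1 (le_of_lt hx)
  · -- t = Ts
    subst heq
    rw [mu', if_pos le_rfl]
    have hA : HasDerivWithinAt (mu T t) (T / (T - t) ^ 2) (Set.Iic t) t :=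
      ((hasDerivAt_f1 (by linarith)).hasDerivWithinAt).congr
        (fun x hx => mu_eq_f1 hx) (mu_eq_f1 le_rfl)
    have hB : HasDerivWithinAt (mu T t) (T / (T - t) ^ 2) (Set.Icc t T) t := by
      have h := ((hasDerivAt_f2 hT t).hasDerivWithinAt
        (s := Set.Icc t T)).congr (fun x hx => mu_eq_f2 hT hx)
        (mu_eq_f2 hT (Set.left_mem_Icc.mpr hT.le))
      have he : (Real.pi / 2) * ((t - t) / (T - t)) = 0 := by simp
      rw [he, Real.cos_zero, mul_one] at h
      exact h
    have := hA.union hB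
    rw [Set.Iic_union_Icc_eq_Iic hT.le] at this
    exact this.hasDerivAt (Iic_mem_nhds hT)
  · rcases lt_trichotomy t T with h2 | rfl | h2
    · -- Ts < t < T
      rw [mu', if_neg (not_le.mpr h1), if_pos h2]
      refine (hasDerivAt_f2 hT t).congr_of_eventuallyEq ?_
      filter_upwards [Ioo_mem_nhds h1 h2] with x hx
      exact mu_eq_f2 hT ⟨hx.1.le, hx.2.le⟩
    · -- t = T
      rw [mu', if_neg (by linarith), if_neg (lt_irrefl t)]
      have hB : HasDerivWithinAt (mu t Ts) 0 (Set.Icc Ts t) t := by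
        have h := ((hasDerivAt_f2 hT t).hasDerivWithinAt
          (s := Set.Icc Ts t)).congr (fun x hx => mu_eq_f2 hT hx)
          (mu_eq_f2 hT (Set.right_mem_Icc.mpr hT.le))
        have he : (Real.pi / 2) * ((t - Ts) / (t - Ts)) = Real.pi / 2 := by
          rw [div_self (by linarith), mul_one]
        rw [he, Real.cos_pi_div_two, mul_zero] at h
        exact h
      have hC : HasDerivWithinAt (mu t Ts) 0 (Set.Ici t) t :=
        ((hasDerivAt_const t (((Real.pi + 2) / Real.pi) * (t / (t - Ts)))).hasDerivWithinAt).congr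
          (fun x hx => mu_eq_f3 hT hx) (mu_eq_f3 hT le_rfl)
      have := hB.union hC
      rw [Set.Icc_union_Ici_eq_Ici hT.le] at this
      exact this.hasDerivAt (Ici_mem_nhds hT)
    · -- T < t
      rw [mu', if_neg (by linarith), if_neg (not_lt.mpr h2.le)]
      refine (hasDerivAt_const t (((Real.pi + 2) / Real.pi) * (T / (T - Ts)))).congr_of_eventuallyEq ?_
      filter_upwards [Ioi_mem_nhds h2] with x hx
      exact mu_eq_f3 hT (le_of_lt hx)

lemma continuous_mu' (hTs : 0 < Ts) (hT : Ts < T) : Continuous (mu' T Ts) := by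
  have hc : (0:ℝ) < T - Ts := by linarith
  have hkey : mu' T Ts = fun t =>
      if t ≤ Ts then T / (T - min t Ts) ^ 2
      else if t ≤ T then T / (T - Ts) ^ 2 * Real.cos ((Real.pi / 2) * ((t - Ts) / (T - Ts)))
      else 0 := by
    funext t
    rcases le_or_gt t Ts with h | h
    · rw [mu', if_pos h, if_pos h, min_eq_left h]
    · rw [mu', if_neg (not_le.mpr h), if_neg (not_le.mpr h)]
      rcases lt_trichotomy t T with h2 | rfl | h2
      · rw [if_pos h2, if_pos h2.le]
      · rw [if_neg (lt_irrefl t), if_pos le_rfl]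
        have he : (Real.pi / 2) * ((t - Ts) / (t - Ts)) = Real.pi / 2 := by
          rw [div_self (by linarith), mul_one]
        rw [he, Real.cos_pi_div_two, mul_zero]
      · rw [if_neg (not_lt.mpr h2.le), if_neg (not_le.mpr h2)]
  rw [hkey]
  have hf : Continuous fun t : ℝ => T / (T - min t Ts) ^ 2 := by
    apply continuous_const.div
    · exact ((continuous_const.sub (continuous_id.min continuous_const)).pow 2)
    · intro t
      have h1 : T - Ts ≤ T - min t Ts := by
        have := min_le_right t Ts; linarith
      exact pow_ne_zero 2 (ne_of_gt (by linarith))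
  have hg2 : Continuous fun t : ℝ =>
      T / (T - Ts) ^ 2 * Real.cos ((Real.pi / 2) * ((t - Ts) / (T - Ts))) := by
    apply continuous_const.mul
    exact Real.continuous_cos.comp (continuous_const.mul ((continuous_id.sub continuous_const).div_const _))
  have hg : Continuous fun t : ℝ =>
      if t ≤ T then T / (T - Ts) ^ 2 * Real.cos ((Real.pi / 2) * ((t - Ts) / (T - Ts))) else 0 := by
    apply Continuous.if_le hg2 continuous_const continuous_id continuous_const
    intro x hx
    simp only [id_eq] at hx
    rw [hx]
    have he : (Real.pi / 2) * ((T - Ts) / (T - Ts)) = Real.pi / 2 := by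
      rw [div_self (by linarith), mul_one]
    rw [he, Real.cos_pi_div_two, mul_zero]
  apply Continuous.if_le hf hg continuous_id continuous_const
  intro x hx
  simp only [id_eq] at hx
  rw [hx]
  simp [min_self, hT.le, Real.cos_zero]

end aux

/-- the PPTA function `μ` is `C¹` and bounded on `[0, ∞)`. -/
theorem mu_contDiffOn_and_bounded (T Ts : ℝ) (hTs : 0 < Ts) (hT : Ts < T) :
    ContDiffOn ℝ 1 (mu T Ts) (Set.Ici 0) ∧
      ∃ M : ℝ, ∀ t ∈ Set.Ici (0 : ℝ), |mu T Ts t| ≤ M := by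
  have hc : (0:ℝ) < T - Ts := by linarith
  have hπ : (0:ℝ) < Real.pi := Real.pi_pos
  constructor
  · have hd : Differentiable ℝ (mu T Ts) := fun t => (hasDerivAt_mu hTs hT t).differentiableAt
    have : ContDiff ℝ 1 (mu T Ts) := by
      rw [contDiff_one_iff_deriv]
      refine ⟨hd, ?_⟩
      have : deriv (mu T Ts) = mu' T Ts := by
        funext t; exact (hasDerivAt_mu hTs hT t).deriv
      rw [this]
      exact continuous_mu' hTs hT
    exact this.contDiffOn
  · refine ⟨(1 + 2 / Real.pi) * (T / (T - Ts)), ?_⟩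
    intro t ht
    have hM0 : (0:ℝ) < T / (T - Ts) := div_pos (by linarith) hc
    rcases le_or_gt t Ts with h1 | h1
    · rw [mu_eq_f1 h1]
      have h2 : (0:ℝ) < T - t := by linarith
      have h3 : T - Ts ≤ T - t := by linarith
      rw [abs_of_nonneg (div_nonneg (by linarith) h2.le)]
      have hle : T / (T - t) ≤ T / (T - Ts) :=
        div_le_div_of_nonneg_left (by linarith) hc h3
      nlinarith [mul_pos (div_pos (by linarith : (0:ℝ) < 2) hπ) hM0]
    · rcases lt_or_ge t T with h2 | h2
      · rw [mu_eq_f2 hT ⟨h1.le, h2.le⟩, abs_mul]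
        rw [abs_of_nonneg hM0.le, mul_comm (1 + 2 / Real.pi)]
        apply mul_le_mul_of_nonneg_left _ hM0.le
        have hs1 := Real.neg_one_le_sin ((Real.pi / 2) * ((t - Ts) / (T - Ts)))
        have hs2 := Real.sin_le_one ((Real.pi / 2) * ((t - Ts) / (T - Ts)))
        have h2π : (0:ℝ) < 2 / Real.pi := by positivity
        rw [abs_le]
        constructor <;> nlinarith
      · have hval : ((Real.pi + 2) / Real.pi) * (T / (T - Ts))
            = (1 + 2 / Real.pi) * (T / (T - Ts)) := by
          have : (Real.pi + 2) / Real.pi = 1 + 2 / Real.pi := by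
            field_simp
          rw [this]
        rw [mu_eq_f3 hT h2, hval,
          abs_of_nonneg (mul_nonneg (by positivity) hM0.le)]
end

section
/- The PPTA function μ is monotonically increasing on [0, T]; its initial value satisfies μ(0) = 1; and μ(t) = ((π + 2)/π)·T/(T − T*) for all t ≥ T. In particular μ(t) ≥ 1 for all t ≥ 0. -/
/-- `μ` is monotonically increasing on `[0, T]`, satisfies `μ(0) = 1`,
equals `((π + 2)/π)·T/(T − T*)` for all `t ≥ T`, and in particular `μ(t) ≥ 1`
for all `t ≥ 0`. -/
theorem mu_monotone_initial_final (T Ts : ℝ) (hTs : 0 < Ts) (hT : Ts < T) :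
    MonotoneOn (mu T Ts) (Set.Icc 0 T) ∧
      mu T Ts 0 = 1 ∧
      (∀ t ≥ T, mu T Ts t = ((Real.pi + 2) / Real.pi) * (T / (T - Ts))) ∧
      (∀ t ≥ (0 : ℝ), 1 ≤ mu T Ts t) := by
  have hπ := Real.pi_pos
  have hd : (0:ℝ) < T - Ts := by linarith
  have hTpos : (0:ℝ) < T := by linarith
  set a : ℝ := T / (T - Ts) with ha
  have ha1 : 1 < a := by
    rw [ha, lt_div_iff₀ hd]; linarith
  set g : ℝ → ℝ := fun t => a * (1 + (2 / Real.pi) * Real.sin ((Real.pi / 2) * ((t - Ts) / (T - Ts)))) with hg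
  -- mu equals g on [Ts, T]
  have hmug : ∀ t ∈ Set.Icc Ts T, mu T Ts t = g t := by
    intro t ht
    unfold mu
    by_cases h1 : t ≤ Ts
    · have : t = Ts := le_antisymm h1 ht.1
      subst this
      simp [hg, Real.sin_zero, ha]
    · rw [if_neg h1]
      by_cases h2 : t < T
      · rw [if_pos h2]
      · have ht' : t = T := le_antisymm ht.2 (not_lt.mp h2)
        rw [if_neg h2, hg]
        simp only [ht']
        rw [div_self hd.ne', mul_one, Real.sin_pi_div_two, ha]
        field_simp
  -- mu equals T/(T-t) on [0, Ts]
  have hmuf : ∀ t ∈ Set.Icc (0:ℝ) Ts, mu T Ts t = T / (T - t) := by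
    intro t ht
    unfold mu
    rw [if_pos ht.2]
  -- monotone on [0, Ts]
  have hmono1 : ∀ x ∈ Set.Icc (0:ℝ) Ts, ∀ y ∈ Set.Icc (0:ℝ) Ts, x ≤ y →
      T / (T - x) ≤ T / (T - y) := by
    intro x hx y hy hxy
    have h1 : (0:ℝ) < T - y := by have := hy.2; linarith
    gcongr <;> linarith
  -- monotone of g on [Ts, T]
  have hmono2 : ∀ x ∈ Set.Icc Ts T, ∀ y ∈ Set.Icc Ts T, x ≤ y → g x ≤ g y := by
    intro x hx y hy hxy
    have hux : (Real.pi / 2) * ((x - Ts) / (T - Ts)) ∈ Set.Icc (-(Real.pi/2)) (Real.pi/2) := by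
      constructor
      · have : (0:ℝ) ≤ (x - Ts) / (T - Ts) := div_nonneg (by linarith [hx.1]) hd.le
        nlinarith
      · have : (x - Ts) / (T - Ts) ≤ 1 := by
          rw [div_le_one hd]; linarith [hx.2]
        nlinarith
    have huy : (Real.pi / 2) * ((y - Ts) / (T - Ts)) ∈ Set.Icc (-(Real.pi/2)) (Real.pi/2) := by
      constructor
      · have : (0:ℝ) ≤ (y - Ts) / (T - Ts) := div_nonneg (by linarith [hy.1]) hd.le
        nlinarith
      · have : (y - Ts) / (T - Ts) ≤ 1 := by
          rw [div_le_one hd]; linarith [hy.2]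
        nlinarith
    have hsin : Real.sin ((Real.pi / 2) * ((x - Ts) / (T - Ts))) ≤
        Real.sin ((Real.pi / 2) * ((y - Ts) / (T - Ts))) := by
      apply Real.strictMonoOn_sin.monotoneOn hux huy
      gcongr <;> linarith
    simp only [hg]
    gcongr
    all_goals first | linarith | positivity
  -- g nonneg-ish: 1 ≤ g t on [Ts,T]
  have hg1 : ∀ t ∈ Set.Icc Ts T, (1:ℝ) ≤ g t := by
    intro t ht
    have hs : (0:ℝ) ≤ Real.sin ((Real.pi / 2) * ((t - Ts) / (T - Ts))) := by
      apply Real.sin_nonneg_of_nonneg_of_le_pi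
      · have : (0:ℝ) ≤ (t - Ts) / (T - Ts) := div_nonneg (by linarith [ht.1]) hd.le
        positivity
      · have : (t - Ts) / (T - Ts) ≤ 1 := by rw [div_le_one hd]; linarith [ht.2]
        nlinarith
    have : (1:ℝ) ≤ 1 + (2 / Real.pi) * Real.sin ((Real.pi / 2) * ((t - Ts) / (T - Ts))) := by
      nlinarith [div_nonneg (by norm_num : (0:ℝ) ≤ 2) hπ.le]
    simp only [hg]
    nlinarith
  have hmono : MonotoneOn (mu T Ts) (Set.Icc 0 T) := by
    intro x hx y hy hxy
    by_cases h1 : x ≤ Ts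
    · rw [hmuf x ⟨hx.1, h1⟩]
      by_cases h2 : y ≤ Ts
      · rw [hmuf y ⟨hy.1, h2⟩]
        exact hmono1 x ⟨hx.1, h1⟩ y ⟨hy.1, h2⟩ hxy
      · push_neg at h2
        rw [hmug y ⟨h2.le, hy.2⟩]
        calc T / (T - x) ≤ T / (T - Ts) := hmono1 x ⟨hx.1, h1⟩ Ts ⟨hTs.le, le_refl _⟩ h1
          _ = g Ts := by
            simp [hg, Real.sin_zero, ha]
          _ ≤ g y := hmono2 Ts ⟨le_refl _, hT.le⟩ y ⟨h2.le, hy.2⟩ h2.le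
    · push_neg at h1
      rw [hmug x ⟨h1.le, hx.2⟩, hmug y ⟨(h1.trans_le hxy).le, hy.2⟩]
      exact hmono2 x ⟨h1.le, hx.2⟩ y ⟨(h1.trans_le hxy).le, hy.2⟩ hxy
  refine ⟨hmono, ?_, ?_, ?_⟩
  · unfold mu
    rw [if_pos hTs.le]
    simp [hTpos.ne']
  · intro t ht
    unfold mu
    rw [if_neg (by linarith), if_neg (by linarith)]
  · intro t ht
    by_cases h1 : t ≤ Ts
    · rw [hmuf t ⟨ht, h1⟩]
      rw [le_div_iff₀ (by linarith)]
      linarith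
    · push_neg at h1
      by_cases h2 : t ≤ T
      · rw [hmug t ⟨h1.le, h2⟩]
        exact hg1 t ⟨h1.le, h2⟩
      · push_neg at h2
        unfold mu
        rw [if_neg (by linarith), if_neg (by linarith)]
        have : (1:ℝ) ≤ (Real.pi + 2) / Real.pi := by
          rw [le_div_iff₀ hπ]; linarith
        nlinarith
end

section
/- If V : [0, T*] → ℝ is differentiable and nonnegative and satisfies the differential inequality V′(t) ≤ −α·(T/(T − t))·V(t) + β for all t ∈ [0, T*], where α > 1/T and β ≥ 0, then V(T*) ≤ ((T − T*)/T)^{αT}·V(0) + (βT/(αT − 1))·[ (T − T*)/T − ((T − T*)/T)^{αT} ]. -/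
/-- Grönwall-type bound on `[0, T*]` for the differential inequality
`V′(t) ≤ −α·(T/(T − t))·V(t) + β` with `α > 1/T` and `β ≥ 0`. -/
theorem prescribed_time_gronwall_bound
    (T Ts α β : ℝ) (hTs : 0 < Ts) (hT : Ts < T) (hα : 1 / T < α) (hβ : 0 ≤ β)
    (V V' : ℝ → ℝ)
    (hV : ∀ t ∈ Set.Icc (0 : ℝ) Ts, HasDerivWithinAt V (V' t) (Set.Icc 0 Ts) t)
    (hVnonneg : ∀ t ∈ Set.Icc (0 : ℝ) Ts, 0 ≤ V t)
    (hineq : ∀ t ∈ Set.Icc (0 : ℝ) Ts, V' t ≤ -α * (T / (T - t)) * V t + β) :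
    V Ts ≤ ((T - Ts) / T) ^ (α * T) * V 0 +
      (β * T / (α * T - 1)) * ((T - Ts) / T - ((T - Ts) / T) ^ (α * T)) := by
  have hT0 : (0:ℝ) < T := hTs.trans hT
  have hαT : 1 < α * T := by
    rw [div_lt_iff₀ hT0] at hα; linarith
  set c : ℝ := α * T with hc
  have hc1 : c - 1 ≠ 0 := by intro h; nlinarith
  set k : ℝ := β * T / (c - 1) with hk
  set r : ℝ → ℝ := fun t => (T - t) / T with hrdef
  have hrpos : ∀ t ∈ Set.Icc (0:ℝ) Ts, 0 < r t := fun t ht =>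
    div_pos (by linarith [ht.2]) hT0
  set G : ℝ → ℝ := fun t => r t ^ (-c) * V t - k * r t ^ (1 - c) with hGdef
  set G' : ℝ → ℝ := fun t => ((-1/T) * (-c) * r t ^ (-c - 1)) * V t + r t ^ (-c) * V' t
      - k * ((-1/T) * (1 - c) * r t ^ (1 - c - 1)) with hG'def
  have hr' : ∀ t : ℝ, HasDerivAt r (-1/T) t := by
    intro t
    have h1 : HasDerivAt (fun x : ℝ => T - x) (-1) t := by
      simpa using (hasDerivAt_id t).const_sub T
    simpa [neg_div] using h1.div_const T
  have hGderiv : ∀ t ∈ Set.Icc (0:ℝ) Ts,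
      HasDerivWithinAt G (G' t) (Set.Icc 0 Ts) t := by
    intro t ht
    have hrt := hrpos t ht
    have h1 : HasDerivWithinAt (fun y => r y ^ (-c)) ((-1/T) * (-c) * r t ^ (-c - 1))
        (Set.Icc 0 Ts) t :=
      ((hr' t).hasDerivWithinAt).rpow_const (Or.inl hrt.ne')
    have h2 : HasDerivWithinAt (fun y => r y ^ (1 - c)) ((-1/T) * (1 - c) * r t ^ (1 - c - 1))
        (Set.Icc 0 Ts) t :=
      ((hr' t).hasDerivWithinAt).rpow_const (Or.inl hrt.ne')
    exact (h1.mul (hV t ht)).sub (h2.const_mul k)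
  have key : ∀ t ∈ Set.Icc (0:ℝ) Ts, G' t ≤ 0 := by
    intro t ht
    have hrt := hrpos t ht
    have hP : (0:ℝ) < r t ^ (-c) := Real.rpow_pos_of_pos hrt _
    have hG'eq : G' t = α * r t ^ (-c - 1) * V t + r t ^ (-c) * V' t - β * r t ^ (-c) := by
      simp only [hG'def, hk]
      have h1cc : (1 : ℝ) - c - 1 = -c := by ring
      rw [h1cc]
      field_simp
      ring
    have hmul : r t ^ (-c) * V' t ≤ r t ^ (-c) * (-α * (T / (T - t)) * V t + β) :=
      mul_le_mul_of_nonneg_left (hineq t ht) hP.le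
    have hTt : T / (T - t) = (r t)⁻¹ := by
      rw [hrdef]
      simp only
      rw [inv_div]
    have hrc1 : r t ^ (-c) * (r t)⁻¹ = r t ^ (-c - 1) := by
      rw [show -c - 1 = -c + -1 by ring, ← Real.rpow_neg_one (r t), ← Real.rpow_add hrt]
    have hzero : α * r t ^ (-c - 1) * V t + r t ^ (-c) * (-α * (T / (T - t)) * V t + β)
        - β * r t ^ (-c) = 0 := by
      rw [hTt]
      have : r t ^ (-c) * (-α * (r t)⁻¹ * V t + β)
          = -α * (r t ^ (-c) * (r t)⁻¹) * V t + r t ^ (-c) * β := by ring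
      rw [this, hrc1]
      ring
    rw [hG'eq]
    linarith
  have hanti : AntitoneOn G (Set.Icc 0 Ts) := by
    apply antitoneOn_of_hasDerivWithinAt_nonpos (convex_Icc 0 Ts)
      (fun t ht => (hGderiv t ht).continuousWithinAt)
    · intro x hx
      rw [interior_Icc] at hx
      exact ((hGderiv x (Set.Ioo_subset_Icc_self hx)).mono
        (by rw [interior_Icc]; exact Set.Ioo_subset_Icc_self))
    · intro x hx
      rw [interior_Icc] at hx
      exact key x (Set.Ioo_subset_Icc_self hx)
  have hGle : G Ts ≤ G 0 :=
    hanti (Set.left_mem_Icc.2 hTs.le) (Set.right_mem_Icc.2 hTs.le) hTs.le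
  -- evaluate G 0 and G Ts
  have hr0 : r 0 = 1 := by rw [hrdef]; simp; simp [hT0.ne']
  have hG0 : G 0 = V 0 - k := by
    simp [hGdef, hr0]
  set rs : ℝ := (T - Ts) / T with hrs
  have hrspos : 0 < rs := div_pos (by linarith) hT0
  set A : ℝ := rs ^ c with hA
  have hApos : 0 < A := Real.rpow_pos_of_pos hrspos _
  have hAB : A * rs ^ (-c) = 1 := by
    rw [hA, ← Real.rpow_add hrspos]; simp
  have hAC : A * rs ^ (1 - c) = rs := by
    rw [hA, ← Real.rpow_add hrspos]
    norm_num
  have hGTs : G Ts = rs ^ (-c) * V Ts - k * rs ^ (1 - c) := rfl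
  have hmul2 : A * (rs ^ (-c) * V Ts - k * rs ^ (1 - c)) ≤ A * (V 0 - k) := by
    apply mul_le_mul_of_nonneg_left _ hApos.le
    rw [← hGTs, ← hG0]; exact hGle
  have he : A * (rs ^ (-c) * V Ts - k * rs ^ (1 - c)) = V Ts - k * rs := by
    rw [mul_sub, ← mul_assoc, hAB, one_mul, mul_left_comm, hAC]
  rw [he] at hmul2
  have hgoal : V Ts ≤ A * V 0 + k * (rs - A) := by
    have : A * (V 0 - k) = A * V 0 - k * A := by ring
    rw [this] at hmul2
    have : k * (rs - A) = k * rs - k * A := by ring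
    linarith [this]
  calc V Ts ≤ A * V 0 + k * (rs - A) := hgoal
    _ = rs ^ c * V 0 + (β * T / (c - 1)) * (rs - rs ^ c) := by rw [hA, hk]
end

section
/- If V : [0, ∞) → ℝ is differentiable and nonnegative and satisfies the differential inequality V′(t) ≤ −α·μ(t)·V(t) + β for all t ≥ 0, where α > 1/T and β ≥ 0, then for every t ≥ T* it holds that V(t) ≤ max{v₁, v₂}, where v₁ = ((T − T*)/T)^{αT}·V(0) + (βT/(αT − 1))·[ (T − T*)/T − ((T − T*)/T)^{αT} ] and v₂ = β(T − T*)/(αT). -/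
lemma hasDerivAt_sub_rpow (T p : ℝ) {t : ℝ} (ht : t < T) :
    HasDerivAt (fun s : ℝ => (T - s) ^ p) (-p * (T - t) ^ (p - 1)) t := by
  have h1 : HasDerivAt (fun s : ℝ => T - s) (-1) t := (hasDerivAt_id t).const_sub T
  have h2 := h1.rpow_const (p := p) (Or.inl (by nlinarith [sub_pos.mpr ht]))
  convert h2 using 1; ring

set_option maxHeartbeats 2000000 in
/-- practical prescribed-time stability criterion (Lemma 1): if
`V′(t) ≤ −α·μ(t)·V(t) + β` for all `t ≥ 0`, with `α > 1/T`, `β ≥ 0`, then for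
every `t ≥ T*` we have `V(t) ≤ max{v₁, v₂}`. -/
theorem practical_prescribed_time_stability
    (T Ts α β : ℝ) (hTs : 0 < Ts) (hT : Ts < T) (hα : 1 / T < α) (hβ : 0 ≤ β)
    (V V' : ℝ → ℝ)
    (hV : ∀ t ∈ Set.Ici (0 : ℝ), HasDerivWithinAt V (V' t) (Set.Ici 0) t)
    (hVnonneg : ∀ t ∈ Set.Ici (0 : ℝ), 0 ≤ V t)
    (hineq : ∀ t ∈ Set.Ici (0 : ℝ), V' t ≤ -α * mu T Ts t * V t + β) :
    ∀ t ≥ Ts,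
      V t ≤ max
        (((T - Ts) / T) ^ (α * T) * V 0 +
          (β * T / (α * T - 1)) * ((T - Ts) / T - ((T - Ts) / T) ^ (α * T)))
        (β * (T - Ts) / (α * T)) := by
  have hT0 : 0 < T := hTs.trans hT
  have hA : 0 < T - Ts := sub_pos.mpr hT
  have hα0 : 0 < α := lt_trans (by positivity) hα
  set p := α * T with hp_def
  have hp1 : 1 < p := by rw [div_lt_iff₀ hT0] at hα; linarith
  have hp0 : 0 < p := lt_trans one_pos hp1
  -- derivative of V at interior points
  have hVd : ∀ s : ℝ, 0 < s → HasDerivAt V (V' s) s := fun s hs =>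
    (hV s (le_of_lt hs)).hasDerivAt (Ici_mem_nhds hs)
  -- μ lower bound on [Ts, ∞)
  have hmu_ge : ∀ s, Ts ≤ s → T / (T - Ts) ≤ mu T Ts s := by
    intro s hs
    unfold mu
    split_ifs with h1 h2
    · have : s = Ts := le_antisymm h1 hs
      rw [this]
    · have hx0 : 0 ≤ (s - Ts) / (T - Ts) := by
        apply div_nonneg <;> linarith
      have hx1 : (s - Ts) / (T - Ts) ≤ 1 := by
        rw [div_le_one hA]; linarith
      have hsin : 0 ≤ Real.sin (Real.pi / 2 * ((s - Ts) / (T - Ts))) := by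
        apply Real.sin_nonneg_of_nonneg_of_le_pi
        · positivity
        · nlinarith [Real.pi_pos]
      have hTA : 0 < T / (T - Ts) := by positivity
      nlinarith [Real.pi_pos, mul_nonneg (div_nonneg (by norm_num : (0:ℝ) ≤ 2) Real.pi_pos.le) hsin]
    · have hTA : 0 < T / (T - Ts) := by positivity
      have h1' : 1 ≤ (Real.pi + 2) / Real.pi := by
        rw [le_div_iff₀ Real.pi_pos]; linarith [Real.pi_pos]
      nlinarith [mul_le_mul_of_nonneg_right h1' hTA.le]
  -- Phase 1 : V Ts ≤ v₁
  set v₁ := ((T - Ts) / T) ^ p * V 0 +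
      (β * T / (p - 1)) * ((T - Ts) / T - ((T - Ts) / T) ^ p) with hv1_def
  have phase1 : V Ts ≤ v₁ := by
    set F : ℝ → ℝ := fun s => β / (p - 1) * (T - s) ^ (1 - p) - V s * (T - s) ^ (-p) with hF_def
    have hmono : MonotoneOn F (Set.Icc 0 Ts) := by
      apply monotoneOn_of_deriv_nonneg (convex_Icc 0 Ts)
      · -- continuity
        intro s hs
        have hsT : s < T := lt_of_le_of_lt hs.2 hT
        have hc1 : ContinuousWithinAt V (Set.Icc 0 Ts) s :=
          ((hV s hs.1).continuousWithinAt).mono (Set.Icc_subset_Ici_self)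
        have hc2 := (hasDerivAt_sub_rpow T (1 - p) hsT).continuousAt.continuousWithinAt
          (s := Set.Icc 0 Ts)
        have hc3 := (hasDerivAt_sub_rpow T (-p) hsT).continuousAt.continuousWithinAt
          (s := Set.Icc 0 Ts)
        exact (hc2.const_smul (β / (p - 1))).sub (hc1.mul hc3)
      · intro s hs
        rw [interior_Icc] at hs
        have hsT : s < T := hs.2.trans hT
        exact (((hasDerivAt_sub_rpow T (1 - p) hsT).const_mul (β / (p - 1))).sub
          ((hVd s hs.1).mul (hasDerivAt_sub_rpow T (-p) hsT))).differentiableAt.differentiableWithinAt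
      · intro s hs
        rw [interior_Icc] at hs
        have hsT : s < T := hs.2.trans hT
        have hTs' : 0 < T - s := sub_pos.mpr hsT
        have hd : HasDerivAt F (β / (p - 1) * (-(1 - p) * (T - s) ^ (1 - p - 1)) -
            (V' s * (T - s) ^ (-p) + V s * (-(-p) * (T - s) ^ (-p - 1)))) s :=
          ((hasDerivAt_sub_rpow T (1 - p) hsT).const_mul (β / (p - 1))).sub
            ((hVd s hs.1).mul (hasDerivAt_sub_rpow T (-p) hsT))
        rw [hd.deriv]
        have hmu : mu T Ts s = T / (T - s) := if_pos (le_of_lt hs.2)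
        have hVle := hineq s (le_of_lt hs.1)
        rw [hmu] at hVle
        have hVpos := hVnonneg s (le_of_lt hs.1)
        -- key: β - V' s ≥ p/(T-s) * V s
        have hkey : p / (T - s) * V s ≤ β - V' s := by
          rw [hp_def, mul_div_assoc]
          nlinarith [hVle]
        have e1 : (T - s) ^ (1 - p - 1) = (T - s) ^ (-p) := by norm_num
        have e2 : (T - s) ^ (-p - 1) = (T - s) ^ (-p) / (T - s) := by
          rw [show -p - 1 = -p + (-1) by ring, Real.rpow_add hTs', Real.rpow_neg_one]
          ring
        rw [e1, e2]
        have hrp : (0:ℝ) < (T - s) ^ (-p) := Real.rpow_pos_of_pos hTs' _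
        have hpne : p - 1 ≠ 0 := ne_of_gt (by linarith)
        have hTsne : T - s ≠ 0 := ne_of_gt hTs'
        have expand : β / (p - 1) * (-(1 - p) * (T - s) ^ (-p)) -
            (V' s * (T - s) ^ (-p) + V s * (-(-p) * ((T - s) ^ (-p) / (T - s)))) =
            ((β - V' s) - p / (T - s) * V s) * (T - s) ^ (-p) := by
          field_simp
          ring
        rw [expand]
        exact mul_nonneg (by linarith) hrp.le
    have hF : F 0 ≤ F Ts := hmono (Set.mem_Icc.mpr ⟨le_refl 0, hTs.le⟩)
      (Set.mem_Icc.mpr ⟨hTs.le, le_refl Ts⟩) hTs.le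
    -- unfold and do the rpow algebra
    simp only [hF_def, sub_zero] at hF
    set x := (T - Ts) ^ p with hx_def
    set y := T ^ p with hy_def
    have hx : 0 < x := Real.rpow_pos_of_pos hA _
    have hy : 0 < y := Real.rpow_pos_of_pos hT0 _
    have ex1 : (T - Ts) ^ (1 - p) = (T - Ts) * x⁻¹ := by
      rw [show (1:ℝ) - p = 1 + (-p) by ring, Real.rpow_add hA, Real.rpow_one,
        Real.rpow_neg hA.le]
    have ex2 : (T - Ts) ^ (-p) = x⁻¹ := by rw [Real.rpow_neg hA.le]
    have ey1 : T ^ (1 - p) = T * y⁻¹ := by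
      rw [show (1:ℝ) - p = 1 + (-p) by ring, Real.rpow_add hT0, Real.rpow_one,
        Real.rpow_neg hT0.le]
    have ey2 : T ^ (-p) = y⁻¹ := by rw [Real.rpow_neg hT0.le]
    have exy : ((T - Ts) / T) ^ p = x / y := Real.div_rpow hA.le hT0.le p
    rw [ex1, ex2, ey1, ey2] at hF
    have key : V Ts * x⁻¹ ≤
        V 0 * y⁻¹ + β / (p - 1) * ((T - Ts) * x⁻¹) - β / (p - 1) * (T * y⁻¹) := by
      linarith
    have key2 := mul_le_mul_of_nonneg_right key hx.le
    rw [mul_assoc, inv_mul_cancel₀ (ne_of_gt hx), mul_one] at key2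
    have hpne : p - 1 ≠ 0 := ne_of_gt (by linarith)
    have heq : (V 0 * y⁻¹ + β / (p - 1) * ((T - Ts) * x⁻¹) - β / (p - 1) * (T * y⁻¹)) * x =
        x / y * V 0 + β * T / (p - 1) * ((T - Ts) / T - x / y) := by
      field_simp
      ring
    rw [hv1_def, exy, ← heq]
    exact key2
  -- Phase 2
  intro t ht
  have hc : 0 < p / (T - Ts) := by positivity
  set c := p / (T - Ts) with hc_def
  set K := β / c with hK_def
  have hKeq : K = β * (T - Ts) / p := by
    rw [hK_def, hc_def, div_div_eq_mul_div]
  set G : ℝ → ℝ := fun s => (V s - K) * Real.exp (c * s) with hG_def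
  have hanti : AntitoneOn G (Set.Icc Ts t) := by
    apply antitoneOn_of_deriv_nonpos (convex_Icc Ts t)
    · intro s hs
      have hc1 : ContinuousWithinAt V (Set.Icc Ts t) s :=
        ((hV s (hTs.le.trans hs.1)).continuousWithinAt).mono
          (fun z hz => le_trans hTs.le hz.1)
      exact ((hc1.sub continuousWithinAt_const).mul
        ((Real.continuous_exp.comp (continuous_const.mul continuous_id)).continuousWithinAt))
    · intro s hs
      rw [interior_Icc] at hs
      have hs0 : 0 < s := lt_trans hTs hs.1
      exact (((hVd s hs0).sub_const K).mul
        (((hasDerivAt_id s).const_mul c).exp)).differentiableAt.differentiableWithinAt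
    · intro s hs
      rw [interior_Icc] at hs
      have hs0 : 0 < s := lt_trans hTs hs.1
      have hd : HasDerivAt G (V' s * Real.exp (c * s) +
          (V s - K) * (Real.exp (c * s) * (c * 1))) s :=
        ((hVd s hs0).sub_const K).mul (((hasDerivAt_id s).const_mul c).exp)
      rw [hd.deriv]
      have hVle := hineq s hs0.le
      have hVpos := hVnonneg s hs0.le
      have hmu := hmu_ge s hs.1.le
      have hexp : 0 < Real.exp (c * s) := Real.exp_pos _
      have hcne : c ≠ 0 := ne_of_gt hc
      have hcK : c * K = β := by
        rw [hK_def]; field_simp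
      have hcV : c * V s ≤ α * mu T Ts s * V s := by
        have h1 : c ≤ α * mu T Ts s := by
          have h2 : c = α * (T / (T - Ts)) := by rw [hc_def, hp_def, mul_div_assoc]
          rw [h2]
          exact mul_le_mul_of_nonneg_left hmu hα0.le
        exact mul_le_mul_of_nonneg_right h1 hVpos
      have heq : V' s * Real.exp (c * s) + (V s - K) * (Real.exp (c * s) * (c * 1)) =
          (V' s + c * V s - β) * Real.exp (c * s) := by
        rw [← hcK]; ring
      rw [heq]
      exact mul_nonpos_of_nonpos_of_nonneg (by nlinarith [hVle, hcV]) hexp.le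
  have hG := hanti (Set.mem_Icc.mpr ⟨le_refl Ts, ht⟩) (Set.mem_Icc.mpr ⟨ht, le_refl t⟩) ht
  simp only [hG_def] at hG
  have hexpTs : 0 < Real.exp (c * Ts) := Real.exp_pos _
  have hexpt : 0 < Real.exp (c * t) := Real.exp_pos _
  have hexple : Real.exp (c * Ts) ≤ Real.exp (c * t) :=
    Real.exp_le_exp.mpr (by nlinarith)
  by_cases hcase : V Ts ≤ K
  · -- V t ≤ K = v₂
    have h1 : (V t - K) * Real.exp (c * t) ≤ 0 :=
      le_trans hG (mul_nonpos_of_nonpos_of_nonneg (by linarith) hexpTs.le)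
    have h2 : V t ≤ K := by nlinarith
    refine le_trans h2 (le_max_of_le_right ?_)
    exact le_of_eq hKeq
  · push_neg at hcase
    have h1 : (V Ts - K) * Real.exp (c * Ts) ≤ (V Ts - K) * Real.exp (c * t) :=
      mul_le_mul_of_nonneg_left hexple (by linarith)
    have h2 : V t ≤ V Ts := by nlinarith
    exact le_trans h2 (le_max_of_le_left phase1)
end

section
/- Let f : ℝⁿ → ℝⁿ and suppose y : [0, T) → ℝⁿ is differentiable and satisfies y′(t) = μ_p(t)·f(y(t)) for all t ∈ [0, T), where μ_p(t) = T/(T − t). Then the time-rescaled trajectory ȳ : [0, ∞) → ℝⁿ defined by ȳ(s) = y(η(s)), with η(s) = T·(1 − e^{−s/T}), satisfies ȳ(0) = y(0) and ȳ′(s) = f(ȳ(s)) for all s ≥ 0; i.e., the prescribed-time-scaled flow on the finite interval [0, T) coincides, after the time scale transformation, with the unscaled flow on the infinite interval [0, ∞). -/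
/-- The time scale transformation function `η(s) = T·(1 − e^{−s/T})`. -/
noncomputable def eta (T : ℝ) (s : ℝ) : ℝ := T * (1 - Real.exp (-s / T))

/-- if `y : [0, T) → ℝⁿ` satisfies `y′(t) = μ_p(t)·f(y(t))` with
`μ_p(t) = T/(T − t)`, then the time-rescaled trajectory `ȳ = y ∘ η` satisfies
`ȳ(0) = y(0)` and `ȳ′(s) = f(ȳ(s))` for all `s ≥ 0`. -/
theorem time_scale_transformation_of_flow
    (T : ℝ) (hT : 0 < T) (n : ℕ)
    (f : (Fin n → ℝ) → (Fin n → ℝ)) (y : ℝ → (Fin n → ℝ))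
    (hy : ∀ t ∈ Set.Ico (0 : ℝ) T, HasDerivAt y ((T / (T - t)) • f (y t)) t) :
    (y ∘ eta T) 0 = y 0 ∧
      ∀ s ≥ (0 : ℝ), HasDerivAt (y ∘ eta T) (f ((y ∘ eta T) s)) s := by
  constructor
  · simp [eta]
  · intro s hs
    have hexp : (0 : ℝ) < Real.exp (-s / T) := Real.exp_pos _
    have hle : Real.exp (-s / T) ≤ 1 := by
      apply Real.exp_le_one_iff.mpr
      have : 0 ≤ s / T := div_nonneg hs hT.le
      rw [neg_div]; linarith
    have hmem : eta T s ∈ Set.Ico (0 : ℝ) T := by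
      constructor
      · exact mul_nonneg hT.le (by linarith)
      · have : 0 < T * Real.exp (-s / T) := by positivity
        unfold eta; nlinarith
    have hη : HasDerivAt (eta T) (Real.exp (-s / T)) s := by
      have h1 : HasDerivAt (fun s : ℝ => -s / T) (-1 / T) s := by
        simpa using ((hasDerivAt_id s).neg.div_const T)
      have h2 : HasDerivAt (fun s : ℝ => Real.exp (-s / T)) (Real.exp (-s / T) * (-1 / T)) s :=
        (Real.hasDerivAt_exp _).comp s h1
      have h3 : HasDerivAt (eta T) (T * (0 - Real.exp (-s / T) * (-1 / T))) s := by
        unfold eta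
        exact ((hasDerivAt_const s (1 : ℝ)).sub h2).const_mul T
      convert h3 using 1
      field_simp
      ring
    have hyd := hy (eta T s) hmem
    have := hyd.scomp s hη
    refine HasDerivAt.congr_deriv this ?_
    have hTη : T - eta T s = T * Real.exp (-s / T) := by unfold eta; ring
    rw [hTη, smul_smul]
    have : Real.exp (-s / T) * (T / (T * Real.exp (-s / T))) = 1 := by
      field_simp
    rw [this, one_smul]
    rfl
end

section
/- Let c₁ > 0, d_m ≥ 0, let μ : [0, ∞) → ℝ be continuous with μ(t) ≥ 1 for all t, and let g : [0, ∞) → ℝ³ be continuous with ‖g(t)‖ ≤ d_m for all t. If e : [0, ∞) → ℝ³ is differentiable and satisfies the observation error dynamics e′(t) = g(t) − c₁·μ(t)·e(t), then ‖e(t)‖ ≤ max{ d_m/c₁, ‖e(0)‖ } for all t ≥ 0; i.e., the ball of radius d_m/c₁ is attractive and forward invariant for the estimation error. -/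
open Set Filter Topology

/-- for the observation-error dynamics `e′ = g − c₁ μ e`, with
`μ ≥ 1` and `‖g‖ ≤ d_m`, the ball of radius `d_m/c₁` is attractive and forward
invariant: `‖e(t)‖ ≤ max{d_m/c₁, ‖e(0)‖}` for all `t ≥ 0`. -/
theorem observer_error_ultimate_bound
    (c₁ dm : ℝ) (hc₁ : 0 < c₁) (hdm : 0 ≤ dm)
    (μ : ℝ → ℝ) (hμcont : ContinuousOn μ (Set.Ici 0))
    (hμ : ∀ t ∈ Set.Ici (0 : ℝ), 1 ≤ μ t)
    (g : ℝ → EuclideanSpace ℝ (Fin 3)) (hgcont : ContinuousOn g (Set.Ici 0))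
    (hg : ∀ t ∈ Set.Ici (0 : ℝ), ‖g t‖ ≤ dm)
    (e : ℝ → EuclideanSpace ℝ (Fin 3))
    (he : ∀ t ∈ Set.Ici (0 : ℝ),
      HasDerivWithinAt e (g t - (c₁ * μ t) • e t) (Set.Ici 0) t) :
    ∀ t ∈ Set.Ici (0 : ℝ), ‖e t‖ ≤ max (dm / c₁) ‖e 0‖ := by
  intro t ht
  set M : ℝ := max (dm / c₁) ‖e 0‖ with hM
  have hM0 : 0 ≤ M := le_trans (div_nonneg hdm hc₁.le) (le_max_left _ _)
  have hdmM : dm ≤ c₁ * M := by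
    have : dm / c₁ ≤ M := le_max_left _ _
    calc dm = c₁ * (dm / c₁) := by field_simp
    _ ≤ c₁ * M := by nlinarith
  have he0M : ‖e 0‖ ≤ M := le_max_right _ _
  -- it suffices to show ‖e t‖ ≤ M + ε for all ε > 0
  refine le_of_forall_pos_le_add fun ε hε => ?_
  -- squared norm function and its derivative
  set v : ℝ → EuclideanSpace ℝ (Fin 3) := fun x => g x - (c₁ * μ x) • e x with hv
  set f : ℝ → ℝ := fun x => inner ℝ (e x) (e x) with hf
  set f' : ℝ → ℝ := fun x => (inner ℝ (e x) (v x) : ℝ) + (inner ℝ (v x) (e x) : ℝ) with hf'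
  have hecont : ContinuousOn e (Ici 0) := fun x hx => (he x hx).continuousWithinAt
  have hfx : ∀ x, f x = ‖e x‖ ^ 2 := fun x => real_inner_self_eq_norm_sq _
  have hderiv : ∀ x ∈ Ico (0 : ℝ) t, HasDerivWithinAt f (f' x) (Ici x) x := by
    intro x hx
    have hx0 : x ∈ Ici (0 : ℝ) := hx.1
    have hsub : Ici x ⊆ Ici (0 : ℝ) := Ici_subset_Ici.2 hx.1
    exact ((he x hx0).mono hsub).inner ℝ ((he x hx0).mono hsub)
  have hcont : ContinuousOn f (Icc 0 t) := by
    have h1 : ContinuousOn e (Icc 0 t) := hecont.mono Icc_subset_Ici_self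
    exact h1.inner h1
  have key : ∀ x ∈ Icc (0 : ℝ) t, f x ≤ (M + ε) ^ 2 := by
    apply image_le_of_liminf_slope_right_lt_deriv_boundary hcont
      (f' := f') (B := fun _ => (M + ε) ^ 2) (B' := fun _ => 0) ?hf' ?ha ?hB ?bound
    case hf' =>
      intro x hx r hr
      have hd := (hderiv x hx)
      rw [hasDerivWithinAt_iff_tendsto_slope] at hd
      have : Ici x \ {x} = Ioi x := by
        ext y; simp [Set.mem_diff, lt_iff_le_and_ne, and_comm, eq_comm]
      rw [this] at hd
      have hev : ∀ᶠ z in 𝓝[>] x, slope f x z < r :=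
        hd (IsOpen.mem_nhds isOpen_Iio hr)
      exact hev.frequently
    case ha =>
      show f 0 ≤ (M + ε) ^ 2
      rw [hfx]
      have : ‖e 0‖ ≤ M + ε := le_trans he0M (by linarith)
      nlinarith [norm_nonneg (e 0)]
    case hB => exact fun x => hasDerivAt_const x _
    case bound =>
      intro x hx hfB
      have hx0 : x ∈ Ici (0 : ℝ) := hx.1
      have hnorm : ‖e x‖ = M + ε := by
        have h1 : ‖e x‖ ^ 2 = (M + ε) ^ 2 := by rw [← hfx]; exact hfB
        nlinarith [norm_nonneg (e x)]
      have hinner : (inner ℝ (e x) (g x) : ℝ) ≤ (M + ε) * dm := by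
        calc (inner ℝ (e x) (g x) : ℝ) ≤ ‖e x‖ * ‖g x‖ := real_inner_le_norm _ _
        _ ≤ (M + ε) * dm := by
            rw [hnorm]; exact mul_le_mul_of_nonneg_left (hg x hx0) (by positivity)
      have hvinner : (inner ℝ (e x) (v x) : ℝ)
          = (inner ℝ (e x) (g x) : ℝ) - (c₁ * μ x) * ‖e x‖ ^ 2 := by
        rw [hv]
        simp only [inner_sub_right, real_inner_smul_right, real_inner_self_eq_norm_sq]
      have hcomm : (inner ℝ (v x) (e x) : ℝ) = (inner ℝ (e x) (v x) : ℝ) :=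
        real_inner_comm _ _
      have hμx : 1 ≤ μ x := hμ x hx0
      have heq : f' x = 2 * ((inner ℝ (e x) (g x) : ℝ) - (c₁ * μ x) * (M + ε) ^ 2) := by
        show (inner ℝ (e x) (v x) : ℝ) + (inner ℝ (v x) (e x) : ℝ) = _
        rw [hcomm, hvinner, hnorm]; ring
      show f' x < 0
      rw [heq]
      have hMε : (0:ℝ) < M + ε := by linarith
      have h2 : c₁ * (M + ε) ^ 2 ≤ c₁ * μ x * (M + ε) ^ 2 := by nlinarith [mul_nonneg (mul_nonneg hc₁.le (sub_nonneg.2 hμx)) (sq_nonneg (M + ε))]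
      have h3 : (M + ε) * dm ≤ (M + ε) * (c₁ * M) :=
        mul_le_mul_of_nonneg_left hdmM hMε.le
      nlinarith [mul_pos (mul_pos hc₁ hε) hMε]
  have := key t ⟨ht, le_refl t⟩
  rw [hfx] at this
  nlinarith [norm_nonneg (e t), hM0, hε.le]
end

section
/- Let μ be the PPTA function with parameters 0 < T* < T, let c₁ > 1/T and d_m ≥ 0, let g : [0, ∞) → ℝ³ be continuous with ‖g(t)‖ ≤ d_m for all t, and let e : [0, ∞) → ℝ³ be differentiable satisfying e′(t) = g(t) − c₁·μ(t)·e(t). Then for every t ≥ T*, (1/2)‖e(t)‖² ≤ max{v₁, v₂}, where v₁ = ((T − T*)/T)^{c₁T}·(1/2)‖e(0)‖² + (d_m²T/(2c₁(c₁T − 1)))·[ (T − T*)/T − ((T − T*)/T)^{c₁T} ] and v₂ = d_m²(T − T*)/(2c₁²T); i.e., the prescribed-time disturbance observer error converges to a residual set within the prescribed time T*. -/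
private lemma decay_aux {F F' : ℝ → ℝ} {a b : ℝ} (hab : a ≤ b)
    (hd : ∀ t ∈ Set.Icc a b, HasDerivWithinAt F (F' t) (Set.Icc a b) t)
    (h0 : ∀ t ∈ Set.Ioo a b, F' t ≤ 0) : F b ≤ F a := by
  have hcont : ContinuousOn F (Set.Icc a b) := fun t ht => (hd t ht).continuousWithinAt
  have hAnti : AntitoneOn F (Set.Icc a b) := by
    apply antitoneOn_of_deriv_nonpos (convex_Icc a b) hcont
    · intro x hx
      rw [interior_Icc] at hx
      exact (((hd x ⟨hx.1.le, hx.2.le⟩).hasDerivAt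
        (Icc_mem_nhds hx.1 hx.2))).differentiableAt.differentiableWithinAt
    · intro x hx
      rw [interior_Icc] at hx
      rw [((hd x ⟨hx.1.le, hx.2.le⟩).hasDerivAt (Icc_mem_nhds hx.1 hx.2)).deriv]
      exact h0 x hx
  exact hAnti (Set.left_mem_Icc.2 hab) (Set.right_mem_Icc.2 hab) hab

private lemma mu_sat_le {T Ts : ℝ} (hTs : 0 < Ts) (hT : Ts < T) {t : ℝ} (ht : Ts ≤ t) :
    T / (T - Ts) ≤ mu T Ts t := by
  have hT0 : (0:ℝ) < T := hTs.trans hT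
  have hTt : (0:ℝ) < T - Ts := by linarith
  have hpi := Real.pi_pos
  have hq : 0 < T / (T - Ts) := div_pos hT0 hTt
  unfold mu
  split_ifs with h1 h2
  · have : t = Ts := le_antisymm h1 ht
    rw [this]
  · push_neg at h1
    have hr0 : 0 ≤ (t - Ts) / (T - Ts) := div_nonneg (by linarith) hTt.le
    have hr1 : (t - Ts) / (T - Ts) ≤ 1 := by rw [div_le_one hTt]; linarith
    have hsin : 0 ≤ Real.sin ((Real.pi / 2) * ((t - Ts) / (T - Ts))) := by
      apply Real.sin_nonneg_of_nonneg_of_le_pi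
      · positivity
      · nlinarith
    have key : 0 ≤ T / (T - Ts) *
        (2 / Real.pi * Real.sin ((Real.pi / 2) * ((t - Ts) / (T - Ts)))) := by positivity
    nlinarith [key]
  · rw [div_mul_eq_mul_div, le_div_iff₀ hpi]
    nlinarith
private lemma mu_ge_one {T Ts : ℝ} (hTs : 0 < Ts) (hT : Ts < T) {t : ℝ} (ht : 0 ≤ t) :
    1 ≤ mu T Ts t := by
  have hTt : (0:ℝ) < T - Ts := by linarith
  by_cases h : t ≤ Ts
  · unfold mu
    rw [if_pos h, le_div_iff₀ (by linarith : (0:ℝ) < T - t)]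
    linarith
  · push_neg at h
    have h2 : 1 ≤ T / (T - Ts) := by rw [le_div_iff₀ hTt]; linarith
    linarith [mu_sat_le hTs hT h.le]

set_option maxHeartbeats 1600000 in
/-- the prescribed-time disturbance observer error `e`, with
dynamics `e′ = g − c₁ μ e`, `‖g‖ ≤ d_m`, `c₁ > 1/T`, satisfies for every
`t ≥ T*` the bound `(1/2)‖e(t)‖² ≤ max{v₁, v₂}`. -/
theorem ptdo_error_prescribed_time_bound
    (T Ts : ℝ) (hTs : 0 < Ts) (hT : Ts < T)
    (c₁ dm : ℝ) (hc₁ : 1 / T < c₁) (hdm : 0 ≤ dm)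
    (g : ℝ → EuclideanSpace ℝ (Fin 3)) (hgcont : ContinuousOn g (Set.Ici 0))
    (hg : ∀ t ∈ Set.Ici (0 : ℝ), ‖g t‖ ≤ dm)
    (e : ℝ → EuclideanSpace ℝ (Fin 3))
    (he : ∀ t ∈ Set.Ici (0 : ℝ),
      HasDerivWithinAt e (g t - (c₁ * mu T Ts t) • e t) (Set.Ici 0) t) :
    ∀ t ≥ Ts,
      (1 / 2) * ‖e t‖ ^ 2 ≤ max
        (((T - Ts) / T) ^ (c₁ * T) * ((1 / 2) * ‖e 0‖ ^ 2) +
          (dm ^ 2 * T / (2 * c₁ * (c₁ * T - 1))) *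
            ((T - Ts) / T - ((T - Ts) / T) ^ (c₁ * T)))
        (dm ^ 2 * (T - Ts) / (2 * c₁ ^ 2 * T)) := by
  have hT0 : (0:ℝ) < T := hTs.trans hT
  have hTt : (0:ℝ) < T - Ts := by linarith
  have hc0 : 0 < c₁ := lt_trans (by positivity) hc₁
  have hcT : 1 < c₁ * T := by rw [div_lt_iff₀ hT0] at hc₁; linarith
  set V : ℝ → ℝ := fun s => (1/2) * ‖e s‖ ^ 2 with hVdef
  have hVnn : ∀ s, 0 ≤ V s := fun s => by positivity
  -- derivative of V
  have hV : ∀ s ∈ Set.Ici (0:ℝ), HasDerivWithinAt V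
      (inner ℝ (e s) (g s - (c₁ * mu T Ts s) • e s)) (Set.Ici 0) s := by
    intro s hs
    have h1 := HasDerivWithinAt.inner ℝ (he s hs) (he s hs)
    have h2 := h1.const_mul (1/2 : ℝ)
    have hfun : (fun τ => (1/2 : ℝ) * inner ℝ (e τ) (e τ)) = V := by
      funext τ; rw [real_inner_self_eq_norm_sq]
    rw [hfun] at h2
    refine h2.congr_deriv ?_
    rw [real_inner_comm (e s) (g s - (c₁ * mu T Ts s) • e s)]
    ring
  -- the key differential inequality
  have hkey : ∀ s ∈ Set.Ici (0:ℝ),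
      (inner ℝ (e s) (g s - (c₁ * mu T Ts s) • e s) : ℝ)
        ≤ -(c₁ * mu T Ts s) * V s + dm^2 / (2*c₁) := by
    intro s hs
    have hmu1 : 1 ≤ mu T Ts s := mu_ge_one hTs hT hs
    have ha : c₁ ≤ c₁ * mu T Ts s := by nlinarith
    have h1 : (inner ℝ (e s) (g s - (c₁ * mu T Ts s) • e s) : ℝ)
        = inner ℝ (e s) (g s) - (c₁ * mu T Ts s) * ‖e s‖^2 := by
      rw [inner_sub_right, real_inner_smul_right, real_inner_self_eq_norm_sq]
    have h2 : (inner ℝ (e s) (g s) : ℝ) ≤ ‖e s‖ * dm :=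
      le_trans (real_inner_le_norm _ _) (mul_le_mul_of_nonneg_left (hg s hs) (norm_nonneg _))
    have young : ‖e s‖ * dm ≤ c₁ * ‖e s‖^2 / 2 + dm^2/(2*c₁) := by
      rw [← sub_nonneg]
      have heq : c₁ * ‖e s‖^2 / 2 + dm^2/(2*c₁) - ‖e s‖ * dm
          = (c₁ * ‖e s‖ - dm)^2 / (2*c₁) := by field_simp; ring
      rw [heq]; positivity
    have hax : c₁ * ‖e s‖^2 ≤ (c₁ * mu T Ts s) * ‖e s‖^2 :=
      mul_le_mul_of_nonneg_right ha (sq_nonneg _)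
    have hVs : V s = (1/2) * ‖e s‖^2 := rfl
    rw [h1, hVs]
    linarith
  -- Phase 1 : integrating factor on [0, Ts]
  set L : ℝ → ℝ := fun s => Real.log T - Real.log (T - s) with hLdef
  have hL : ∀ s ∈ Set.Icc (0:ℝ) Ts, HasDerivAt L (1/(T-s)) s := by
    intro s hs
    have hTs' : (0:ℝ) < T - s := by have := hs.2; linarith
    have hd1 : HasDerivAt (fun x : ℝ => T - x) (-1) s := by
      simpa using (hasDerivAt_id s).const_sub T
    have hd3 := (hd1.log (ne_of_gt hTs')).const_sub (Real.log T)
    rw [hLdef]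
    refine hd3.congr_deriv ?_
    ring
  set C : ℝ := dm^2 * T / (2*c₁*(c₁*T - 1)) with hCdef
  set G : ℝ → ℝ := fun s => V s * Real.exp (c₁*T * L s) - C * Real.exp ((c₁*T - 1) * L s)
    with hGdef
  have hexpL : ∀ s ∈ Set.Icc (0:ℝ) Ts, Real.exp (L s) = T / (T - s) := by
    intro s hs
    have hTs' : (0:ℝ) < T - s := by have := hs.2; linarith
    rw [hLdef]
    rw [Real.exp_sub, Real.exp_log hT0, Real.exp_log hTs']
  have hG : ∀ s ∈ Set.Icc (0:ℝ) Ts, HasDerivWithinAt G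
      ((inner ℝ (e s) (g s - (c₁ * mu T Ts s) • e s) : ℝ) * Real.exp (c₁*T * L s)
        + V s * (Real.exp (c₁*T * L s) * (c₁*T * (1/(T-s))))
        - C * (Real.exp ((c₁*T - 1) * L s) * ((c₁*T - 1) * (1/(T-s)))))
      (Set.Icc 0 Ts) s := by
    intro s hs
    have hVs := (hV s hs.1).mono (Set.Icc_subset_Ici_self : Set.Icc (0:ℝ) Ts ⊆ Set.Ici 0)
    have hE1 : HasDerivWithinAt (fun τ => Real.exp (c₁*T * L τ))
        (Real.exp (c₁*T * L s) * (c₁*T * (1/(T-s)))) (Set.Icc 0 Ts) s :=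
      (((hL s hs).const_mul (c₁*T)).exp).hasDerivWithinAt
    have hE2 : HasDerivWithinAt (fun τ => Real.exp ((c₁*T - 1) * L τ))
        (Real.exp ((c₁*T - 1) * L s) * ((c₁*T - 1) * (1/(T-s)))) (Set.Icc 0 Ts) s :=
      (((hL s hs).const_mul (c₁*T - 1)).exp).hasDerivWithinAt
    exact (hVs.mul hE1).sub (hE2.const_mul C)
  have hGmono : G Ts ≤ G 0 := by
    apply decay_aux hTs.le hG
    intro s hs
    have hs0 : (0:ℝ) ≤ s := hs.1.le
    have hsIcc : s ∈ Set.Icc (0:ℝ) Ts := ⟨hs.1.le, hs.2.le⟩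
    have hTs' : (0:ℝ) < T - s := by have := hs.2; linarith
    have hmus : mu T Ts s = T / (T - s) := by unfold mu; rw [if_pos hs.2.le]
    have hI := hkey s hs0
    rw [hmus] at hI
    have hEE : Real.exp (c₁*T * L s) = Real.exp ((c₁*T - 1) * L s) * (T / (T - s)) := by
      rw [← hexpL s hsIcc, ← Real.exp_add]
      congr 1
      ring
    have hstep := mul_le_mul_of_nonneg_right hI (Real.exp_pos (c₁*T * L s)).le
    rw [hmus] at *
    rw [hEE] at hstep ⊢
    have halg : (-(c₁ * (T / (T - s))) * V s + dm^2 / (2*c₁)) *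
          (Real.exp ((c₁*T - 1) * L s) * (T / (T - s)))
        + V s * (Real.exp ((c₁*T - 1) * L s) * (T / (T - s)) * (c₁*T * (1/(T-s))))
        - C * (Real.exp ((c₁*T - 1) * L s) * ((c₁*T - 1) * (1/(T-s)))) = 0 := by
      have hne1 : T - s ≠ 0 := ne_of_gt hTs'
      have hne2 : c₁ ≠ 0 := ne_of_gt hc0
      have hne3 : c₁ * T - 1 ≠ 0 := by intro hcon; nlinarith
      rw [hCdef]
      field_simp
      ring
    linarith
  -- evaluate G at the endpoints
  have hL0 : L 0 = 0 := by rw [hLdef]; simp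
  have hLTs : L Ts = Real.log T - Real.log (T - Ts) := rfl
  set E : ℝ := Real.exp (c₁*T * L Ts) with hEdef
  have hE0 : 0 < E := Real.exp_pos _
  have hrE : ((T - Ts) / T) ^ (c₁ * T) = E⁻¹ := by
    rw [hEdef, Real.rpow_def_of_pos (div_pos hTt hT0), ← Real.exp_neg]
    congr 1
    rw [hLTs, Real.log_div (ne_of_gt hTt) (ne_of_gt hT0)]
    ring
  have hr : Real.exp (-(L Ts)) = (T - Ts) / T := by
    rw [hLTs, show -(Real.log T - Real.log (T - Ts)) = Real.log (T - Ts) - Real.log T by ring,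
      Real.exp_sub, Real.exp_log hT0, Real.exp_log hTt]
  have hE2Ts : Real.exp ((c₁*T - 1) * L Ts) = E * ((T - Ts) / T) := by
    rw [← hr, hEdef, ← Real.exp_add]
    congr 1
    ring
  have hstep1 : V Ts ≤ ((T - Ts) / T) ^ (c₁ * T) * V 0 + C * ((T - Ts) / T -
      ((T - Ts) / T) ^ (c₁ * T)) := by
    have hG0 : G 0 = V 0 - C := by
      rw [hGdef]; simp [hL0]
    have hGTs : G Ts = V Ts * E - C * (E * ((T - Ts) / T)) := by
      rw [hGdef]; simp only [hE2Ts, hEdef]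
    rw [hG0, hGTs] at hGmono
    rw [hrE]
    rw [show V Ts = (V Ts * E) * E⁻¹ by field_simp]
    have h2 : V Ts * E ≤ V 0 - C + C * (E * ((T - Ts) / T)) := by linarith
    calc (V Ts * E) * E⁻¹ ≤ (V 0 - C + C * (E * ((T - Ts) / T))) * E⁻¹ :=
          mul_le_mul_of_nonneg_right h2 (by positivity)
      _ = E⁻¹ * V 0 + C * ((T - Ts) / T - E⁻¹) := by field_simp; ring
  -- Phase 2 : constant-rate decay on [Ts, t]
  intro t ht
  set v₂ : ℝ := dm ^ 2 * (T - Ts) / (2 * c₁ ^ 2 * T) with hv2def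
  set k : ℝ := c₁ * T / (T - Ts) with hkdef
  have hk0 : 0 < k := by positivity
  have hkv : k * v₂ = dm ^ 2 / (2 * c₁) := by
    rw [hkdef, hv2def]; field_simp
  rcases eq_or_lt_of_le ht with rfl | htlt
  · exact le_trans hstep1 (le_max_left _ _)
  · set H : ℝ → ℝ := fun s => (V s - v₂) * Real.exp (k * (s - Ts)) with hHdef
    have hH : ∀ s ∈ Set.Icc Ts t, HasDerivWithinAt H
        (((inner ℝ (e s) (g s - (c₁ * mu T Ts s) • e s) : ℝ))
            * Real.exp (k * (s - Ts))
          + (V s - v₂) * (Real.exp (k * (s - Ts)) * (k * 1))) (Set.Icc Ts t) s := by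
      intro s hs
      have hs0 : s ∈ Set.Ici (0:ℝ) := le_trans hTs.le hs.1
      have hVs := ((hV s hs0).sub_const v₂).mono
        (fun x hx => le_trans hTs.le hx.1 : Set.Icc Ts t ⊆ Set.Ici 0)
      have hEx : HasDerivWithinAt (fun τ => Real.exp (k * (τ - Ts)))
          (Real.exp (k * (s - Ts)) * (k * 1)) (Set.Icc Ts t) s :=
        ((((hasDerivAt_id s).sub_const Ts).const_mul k).exp).hasDerivWithinAt
      exact hVs.mul hEx
    have hHmono : H t ≤ H Ts := by
      apply decay_aux htlt.le hH
      intro s hs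
      have hs0 : s ∈ Set.Ici (0:ℝ) := le_trans hTs.le hs.1.le
      have hI := hkey s hs0
      have hmus : T / (T - Ts) ≤ mu T Ts s := mu_sat_le hTs hT hs.1.le
      have hck : k ≤ c₁ * mu T Ts s := by
        rw [hkdef, mul_div_assoc]
        exact mul_le_mul_of_nonneg_left hmus hc0.le
      have hI2 : (inner ℝ (e s) (g s - (c₁ * mu T Ts s) • e s) : ℝ) ≤ -k * V s + k * v₂ := by
        rw [hkv]
        nlinarith [hVnn s]
      have hEx : 0 < Real.exp (k * (s - Ts)) := Real.exp_pos _
      nlinarith [mul_le_mul_of_nonneg_right hI2 hEx.le]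
    have hHt : H t = (V t - v₂) * Real.exp (k * (t - Ts)) := rfl
    have hHTs : H Ts = V Ts - v₂ := by rw [hHdef]; simp
    rw [hHt, hHTs] at hHmono
    rcases le_or_gt (V t) v₂ with h | h
    · exact le_trans h (le_max_right _ _)
    · have h1 : 1 ≤ Real.exp (k * (t - Ts)) :=
        Real.one_le_exp (mul_nonneg hk0.le (by linarith))
      have h2 : V t - v₂ ≤ (V t - v₂) * Real.exp (k * (t - Ts)) := by
        nlinarith
      have h3 : V t ≤ V Ts := by linarith
      exact le_trans (le_trans h3 hstep1) (le_max_left _ _)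
end

section
/- Let J be a constant real 3×3 matrix, c₁ > 0, and let μ : ℝ → ℝ and ω_e, u, H, d, p : ℝ → ℝ³ be differentiable functions satisfying the error dynamics J·ω_e′(t) = H(t) + u(t) + d(t) and the observer internal dynamics p′(t) = −c₁μ(t)·p(t) − c₁μ(t)·( c₁μ(t)·J·ω_e(t) + H(t) + u(t) ) − c₁μ′(t)·J·ω_e(t). Define the disturbance estimate d̂(t) = p(t) + c₁μ(t)·J·ω_e(t) and the estimation error d̃(t) = d(t) − d̂(t). Then d̃ satisfies d̃′(t) = d′(t) − c₁μ(t)·d̃(t) for all t. -/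
/-- the estimation error `d̃ = d − d̂` of the prescribed-time
disturbance observer, where `d̂ = p + c₁ μ J ω_e`, satisfies the error dynamics
`d̃′ = d′ − c₁ μ d̃`, given the system dynamics `J ω_e′ = H + u + d` and the
observer internal dynamics for `p`. -/
theorem ptdo_estimation_error_dynamics
    (J : Matrix (Fin 3) (Fin 3) ℝ) (c₁ : ℝ) (hc₁ : 0 < c₁)
    (μ μ' : ℝ → ℝ) (ωe ωe' u H d d' p : ℝ → Fin 3 → ℝ)
    (hμ : ∀ t, HasDerivAt μ (μ' t) t)
    (hωe : ∀ t, HasDerivAt ωe (ωe' t) t)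
    (hdyn : ∀ t, J.mulVec (ωe' t) = H t + u t + d t)
    (hd : ∀ t, HasDerivAt d (d' t) t)
    (hp : ∀ t, HasDerivAt p
      (-(c₁ * μ t) • p t
        - (c₁ * μ t) • ((c₁ * μ t) • J.mulVec (ωe t) + H t + u t)
        - (c₁ * μ' t) • J.mulVec (ωe t)) t) :
    ∀ t, HasDerivAt (fun s => d s - (p s + (c₁ * μ s) • J.mulVec (ωe s)))
      (d' t - (c₁ * μ t) • (d t - (p t + (c₁ * μ t) • J.mulVec (ωe t)))) t := by
  intro t
  have hg : HasDerivAt (fun s => J.mulVec (ωe s)) (J.mulVec (ωe' t)) t := by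
    have := (Matrix.mulVecLin J).toContinuousLinearMap.hasFDerivAt.comp_hasDerivAt t (hωe t)
    exact this
  have hcμ : HasDerivAt (fun s => c₁ * μ s) (c₁ * μ' t) t := (hμ t).const_mul c₁
  have hsm : HasDerivAt (fun s => (c₁ * μ s) • J.mulVec (ωe s))
      ((c₁ * μ t) • J.mulVec (ωe' t) + (c₁ * μ' t) • J.mulVec (ωe t)) t := hcμ.smul hg
  have h := (hd t).sub ((hp t).add hsm)
  refine h.congr_deriv ?_
  rw [hdyn]
  simp only [smul_add, smul_sub, smul_smul, smul_neg, neg_smul]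
  abel
end
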